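/- Suppose H is a real-analytic function on (0, ∞) such that for some ε > 0 and some sequence (aₙ) of non-negative real numbers, H(R) = Σ_{n=0}^∞ aₙ Rⁿ for all R ∈ (0, ε), the series converging there. Then the power series Σ_{n=0}^∞ aₙ Rⁿ has infinite radius of convergence (it converges for every R ∈ ℝ). -/

import Mathlib

open FormalMultilinearSeries ENNReal Set

private lemma pnce_coeff_hasSum (a : ℕ → ℝ) {x0 : ℝ}
    (hx0 : (‖x0‖₊ : ℝ≥0∞) < (ofScalars ℝ a).radius) (k : ℕ) :
    HasSum (fun l : ℕ => ((k + l).choose k : ℝ) * (a (k + l) * x0 ^ l))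
      ((ofScalars ℝ a).changeOrigin x0 k (fun _ => (1 : ℝ))) := by
  set p := ofScalars ℝ a with hp
  have rpos : 0 < p.radius := lt_of_le_of_lt zero_le hx0
  have hmem : x0 ∈ EMetric.ball (0 : ℝ) p.radius := mem_emetric_ball_zero_iff.2 hx0
  have h1 := (p.hasFPowerSeriesOnBall_changeOrigin k rpos).hasSum hmem
  rw [zero_add] at h1
  have h2 := ContinuousMultilinearMap.hasSum_eval h1 (fun _ => (1 : ℝ))
  convert h2 using 2 with l
  · rfl
  have hterm : ∀ s : {s : Finset (Fin (k + l)) // s.card = l},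
      p.changeOriginSeriesTerm k l s.1 s.2 (fun _ => x0) (fun _ => (1 : ℝ))
        = a (k + l) * x0 ^ l := by
    intro s
    rw [p.changeOriginSeriesTerm_apply]
    show (a (k + l) • ContinuousMultilinearMap.mkPiAlgebraFin ℝ (k + l) ℝ)
        (s.1.piecewise (fun _ => x0) (fun _ => (1 : ℝ))) = _
    rw [ContinuousMultilinearMap.smul_apply, ContinuousMultilinearMap.mkPiAlgebraFin_apply,
      List.prod_ofFn, Finset.prod_piecewise]
    simp [s.2, smul_eq_mul]
  have heval : (p.changeOriginSeries k l fun _ => x0) (fun _ => (1 : ℝ))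
      = ∑ s : {s : Finset (Fin (k + l)) // s.card = l},
          p.changeOriginSeriesTerm k l s.1 s.2 (fun _ => x0) (fun _ => (1 : ℝ)) := by
    rw [changeOriginSeries, ContinuousMultilinearMap.sum_apply,
      ContinuousMultilinearMap.sum_apply]
  rw [heval, Finset.sum_congr rfl (fun s _ => hterm s), Finset.sum_const, Finset.card_univ,
    Fintype.card_finset_len, Fintype.card_fin, nsmul_eq_mul]
  congr 2
  have h := Nat.choose_symm (Nat.le_add_right k l)
  rw [Nat.add_sub_cancel_left] at h
  exact h.symm

private lemma pnce_summable_shift (a : ℕ → ℝ) (ha : ∀ n, 0 ≤ a n) {x0 t : ℝ}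
    (hx0 : 0 ≤ x0) (ht : 0 ≤ t)
    (hx0r : (‖x0‖₊ : ℝ≥0∞) < (ofScalars ℝ a).radius)
    (htr : (‖t‖₊ : ℝ≥0∞) < ((ofScalars ℝ a).changeOrigin x0).radius) :
    Summable (fun n => a n * (x0 + t) ^ n) := by
  set p := ofScalars ℝ a with hp
  set c : ℕ → ℝ := fun k => p.changeOrigin x0 k (fun _ => (1 : ℝ)) with hc
  have hck : ∀ k, HasSum (fun l : ℕ => ((k + l).choose k : ℝ) * (a (k + l) * x0 ^ l)) (c k) :=
    fun k => pnce_coeff_hasSum a hx0r k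
  have hterm_nonneg : ∀ k l : ℕ, 0 ≤ ((k + l).choose k : ℝ) * (a (k + l) * x0 ^ l) := by
    intro k l
    exact mul_nonneg (by positivity) (mul_nonneg (ha _) (pow_nonneg hx0 _))
  have hcle : ∀ k, c k ≤ ‖p.changeOrigin x0 k‖ := by
    intro k
    calc c k ≤ |c k| := le_abs_self _
      _ = ‖p.changeOrigin x0 k (fun _ => (1 : ℝ))‖ := rfl
      _ ≤ ‖p.changeOrigin x0 k‖ * ∏ i, ‖(fun _ : Fin k => (1 : ℝ)) i‖ :=
          ContinuousMultilinearMap.le_opNorm _ _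
      _ = ‖p.changeOrigin x0 k‖ := by simp
  have hsum : Summable (fun k => ‖p.changeOrigin x0 k‖ * t ^ k) := by
    have h := (p.changeOrigin x0).summable_norm_mul_pow htr
    simp only [coe_nnnorm, Real.norm_of_nonneg ht] at h
    exact h
  set M := ∑' k, ‖p.changeOrigin x0 k‖ * t ^ k with hM
  apply summable_of_sum_range_le
    (fun n => mul_nonneg (ha n) (pow_nonneg (add_nonneg hx0 ht) n))
  intro N
  set F : ℕ → ℕ → ℝ :=
    fun n k => if k ≤ n then (n.choose k : ℝ) * a n * x0 ^ (n - k) * t ^ k else 0 with hF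
  have hFnonneg : ∀ n k, 0 ≤ F n k := by
    intro n k
    rw [hF]
    dsimp only
    split
    · exact mul_nonneg (mul_nonneg (mul_nonneg (by positivity) (ha _))
        (pow_nonneg hx0 _)) (pow_nonneg ht _)
    · exact le_rfl
  calc ∑ n ∈ Finset.range N, a n * (x0 + t) ^ n
      = ∑ n ∈ Finset.range N, ∑ k ∈ Finset.range (n + 1), F n k := by
        refine Finset.sum_congr rfl fun n hn => ?_
        rw [show x0 + t = t + x0 from add_comm _ _, add_pow, Finset.mul_sum]
        refine Finset.sum_congr rfl fun k hk => ?_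
        rw [Finset.mem_range] at hk
        have hkn : k ≤ n := Nat.lt_succ_iff.mp hk
        rw [hF]
        dsimp only
        rw [if_pos hkn]
        ring
    _ ≤ ∑ n ∈ Finset.range N, ∑ k ∈ Finset.range N, F n k := by
        refine Finset.sum_le_sum fun n hn => ?_
        refine Finset.sum_le_sum_of_subset_of_nonneg ?_ (fun k _ _ => hFnonneg n k)
        exact Finset.range_subset_range.2 (Finset.mem_range.1 hn)
    _ = ∑ k ∈ Finset.range N, ∑ n ∈ Finset.range N, F n k := Finset.sum_comm
    _ ≤ ∑ k ∈ Finset.range N, ‖p.changeOrigin x0 k‖ * t ^ k := by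
        refine Finset.sum_le_sum fun k _ => ?_
        have hfilter : Finset.filter (fun n => k ≤ n) (Finset.range N) = Finset.Ico k N := by
          ext n
          simp [Finset.mem_filter, Finset.mem_range, Finset.mem_Ico, and_comm]
        have h1 : ∑ n ∈ Finset.range N, F n k
            = ∑ n ∈ Finset.Ico k N, (n.choose k : ℝ) * a n * x0 ^ (n - k) * t ^ k := by
          rw [hF]
          dsimp only
          rw [← Finset.sum_filter, hfilter]
        rw [h1, Finset.sum_Ico_eq_sum_range]
        have h2 : ∀ l, (((k + l).choose k : ℝ)) * a (k + l) * x0 ^ (k + l - k) * t ^ k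
            = (((k + l).choose k : ℝ) * (a (k + l) * x0 ^ l)) * t ^ k := by
          intro l
          rw [Nat.add_sub_cancel_left]
          ring
        rw [Finset.sum_congr rfl (fun l _ => h2 l), ← Finset.sum_mul]
        have hple := sum_le_hasSum (Finset.range (N - k)) (fun l _ => hterm_nonneg k l) (hck k)
        exact mul_le_mul_of_nonneg_right (hple.trans (hcle k)) (pow_nonneg ht k)
    _ ≤ M := Summable.sum_le_tsum _ (fun k _ => mul_nonneg (norm_nonneg _) (pow_nonneg ht k)) hsum

/-- If `H` is real-analytic on `(0, ∞)` and on `(0, ε)` is given by a convergent power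
series `Σ aₙ Rⁿ` with non-negative coefficients, then that power series has infinite
radius of convergence, i.e. it converges for every real `R`. -/
theorem powerSeries_nonneg_coeff_entire (H : ℝ → ℝ)
    (hH : AnalyticOnNhd ℝ H (Set.Ioi 0))
    (a : ℕ → ℝ) (ha : ∀ n, 0 ≤ a n)
    (ε : ℝ) (hε : 0 < ε)
    (hser : ∀ R ∈ Set.Ioo (0 : ℝ) ε, HasSum (fun n => a n * R ^ n) (H R)) :
    ∀ R : ℝ, Summable (fun n => a n * R ^ n) := by
  set p := ofScalars ℝ a with hp
  have hpnorm : ∀ n, ‖p n‖ = a n := by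
    intro n
    rw [hp, ofScalars_norm, Real.norm_eq_abs, abs_of_nonneg (ha n)]
  have hrad : ∀ r : ℝ, 0 < r → r < ε → ENNReal.ofReal r ≤ p.radius := by
    intro r h0 hε'
    have hs : Summable (fun n => ‖p n‖ * r ^ n) := by
      have := (hser r ⟨h0, hε'⟩).summable
      simpa [hpnorm] using this
    have hle := p.le_radius_of_summable (r := r.toNNReal)
      (by rwa [Real.coe_toNNReal _ h0.le])
    rwa [ENNReal.ofReal]
  have hρpos : 0 < p.radius := by
    refine lt_of_lt_of_le ?_ (hrad (ε / 2) (by positivity) (by linarith))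
    simp [ENNReal.ofReal_pos]
    positivity
  intro R
  set T : ℝ := |R| + 1 with hT
  have hT0 : 0 < T := by positivity
  have key : Summable (fun n => a n * T ^ n) → Summable (fun n => a n * R ^ n) := by
    intro h
    refine Summable.of_norm ?_
    refine Summable.of_nonneg_of_le (fun n => norm_nonneg _) (fun n => ?_) h
    rw [norm_mul, norm_pow, Real.norm_eq_abs, Real.norm_eq_abs, abs_of_nonneg (ha n)]
    have h1 : |R| ^ n ≤ T ^ n := pow_le_pow_left₀ (abs_nonneg R) (by simp [hT]) n
    exact mul_le_mul_of_nonneg_left h1 (ha n)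
  apply key
  by_cases hcase : (‖T‖₊ : ℝ≥0∞) < p.radius
  · have h := p.summable_norm_mul_pow hcase
    simp only [coe_nnnorm, Real.norm_of_nonneg hT0.le, hpnorm] at h
    exact h
  -- the bad case : finite radius, derive a contradiction
  exfalso
  have hfin : p.radius ≠ ⊤ := by
    intro htop
    exact hcase (htop ▸ ENNReal.coe_lt_top)
  set ρr := p.radius.toReal with hρr_def
  have hρr : 0 < ρr := ENNReal.toReal_pos hρpos.ne' hfin
  have hρeq : ENNReal.ofReal ρr = p.radius := ENNReal.ofReal_toReal hfin
  set f := p.sum with hf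
  have hf_on : HasFPowerSeriesOnBall f p 0 p.radius := p.hasFPowerSeriesOnBall hρpos
  have hsub : Set.Ioo (0 : ℝ) ρr ⊆ Metric.eball (0 : ℝ) p.radius := by
    intro x hx
    rw [Metric.mem_eball, edist_zero_right]
    rw [Real.enorm_eq_ofReal hx.1.le, ← hρeq]
    exact (ENNReal.ofReal_lt_ofReal_iff hρr).2 hx.2
  have heqOn : Set.EqOn f H (Set.Ioo 0 ρr) := by
    have hz : (min ε ρr) / 2 ∈ Set.Ioo (0 : ℝ) ρr := by
      constructor
      · positivity
      · calc (min ε ρr) / 2 < min ε ρr := by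
              have : 0 < min ε ρr := lt_min hε hρr
              linarith
          _ ≤ ρr := min_le_right _ _
    refine AnalyticOnNhd.eqOn_of_preconnected_of_eventuallyEq
      ((hf_on.analyticOnNhd).mono hsub) (hH.mono (fun x hx => hx.1)) isPreconnected_Ioo hz ?_
    have hopen : Set.Ioo (0 : ℝ) (min ε ρr) ∈ nhds ((min ε ρr) / 2) := by
      refine (isOpen_Ioo).mem_nhds ⟨by positivity, ?_⟩
      have : 0 < min ε ρr := lt_min hε hρr
      linarith
    filter_upwards [hopen] with x hx
    have hxε : x ∈ Set.Ioo (0 : ℝ) ε := ⟨hx.1, lt_of_lt_of_le hx.2 (min_le_left _ _)⟩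
    have htsum := (hser x hxε).tsum_eq
    rw [← htsum, hf]
    exact tsum_congr fun n => by rw [hp, ofScalars_apply_eq, smul_eq_mul]
  -- power series of H at ρr
  obtain ⟨q, rq, hq⟩ : ∃ q rq, HasFPowerSeriesOnBall H q ρr rq := by
    obtain ⟨q, hq0⟩ := hH ρr (Set.mem_Ioi.2 hρr)
    obtain ⟨rq, hq⟩ := hq0
    exact ⟨q, rq, hq⟩
  -- choose a small δ
  obtain ⟨δ, hδ0, hδlt⟩ :=
    ENNReal.lt_iff_exists_nnreal_btwn.1 (lt_min hq.r_pos (ENNReal.ofReal_pos.2 hρr))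
  have hδpos : (0 : ℝ) < δ := by exact_mod_cast hδ0
  have hδrq : (δ : ℝ≥0∞) < rq := hδlt.trans_le (min_le_left _ _)
  have hδρ : (δ : ℝ) < ρr := by
    have h := hδlt.trans_le (min_le_right _ _)
    rw [← ENNReal.ofReal_coe_nnreal] at h
    exact (ENNReal.ofReal_lt_ofReal_iff hρr).1 h
  set d : ℝ := (δ : ℝ) with hd
  set η : ℝ := d / 2 with hη
  have hηpos : 0 < η := by positivity
  have hηd : η < d := by simp [hη]; linarith
  set x0 : ℝ := ρr - η with hx0
  have hx0pos : 0 < x0 := by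
    have : η < ρr := lt_trans hηd hδρ
    simp [hx0]; linarith
  have hx0lt : x0 < ρr := by simp [hx0]; linarith
  have hx0rad : (‖x0‖₊ : ℝ≥0∞) < p.radius := by
    rw [← enorm_eq_nnnorm, Real.enorm_eq_ofReal hx0pos.le, ← hρeq]
    exact (ENNReal.ofReal_lt_ofReal_iff hρr).2 hx0lt
  -- power series of f at x0
  have hfx0 : HasFPowerSeriesAt f (p.changeOrigin x0) x0 := by
    have h := hf_on.changeOrigin (y := x0) hx0rad
    rw [zero_add] at h
    exact h.hasFPowerSeriesAt
  -- power series of H at x0 with large radius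
  have hηnorm : (‖-η‖₊ : ℝ≥0∞) = ENNReal.ofReal η := by
    rw [nnnorm_neg, ← enorm_eq_nnnorm, Real.enorm_eq_ofReal hηpos.le]
  have hηrq : (‖-η‖₊ : ℝ≥0∞) < rq := by
    rw [hηnorm]
    calc ENNReal.ofReal η ≤ ENNReal.ofReal d := ENNReal.ofReal_le_ofReal hηd.le
      _ = (δ : ℝ≥0∞) := ENNReal.ofReal_coe_nnreal
      _ < rq := hδrq
  have hHx0 : HasFPowerSeriesOnBall H (q.changeOrigin (-η)) x0 (rq - ‖-η‖₊) := by
    have h := hq.changeOrigin (y := -η) hηrq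
    rwa [show ρr + -η = x0 by rw [hx0]; ring] at h
  -- f and H agree near x0
  have heqn : f =ᶠ[nhds x0] H :=
    Filter.eventuallyEq_of_mem (isOpen_Ioo.mem_nhds ⟨hx0pos, hx0lt⟩) heqOn
  have hfx0' : HasFPowerSeriesAt H (p.changeOrigin x0) x0 := hfx0.congr heqn
  have peq : p.changeOrigin x0 = q.changeOrigin (-η) :=
    hfx0'.eq_formalMultilinearSeries hHx0.hasFPowerSeriesAt
  have hradc : rq - ENNReal.ofReal η ≤ (p.changeOrigin x0).radius := by
    rw [peq, ← hηnorm]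
    exact hHx0.r_le
  -- choose t strictly between η and the radius of the shifted series
  have hηlt : ENNReal.ofReal η < rq - ENNReal.ofReal η := by
    rw [lt_tsub_iff_right, ← ENNReal.ofReal_add hηpos.le hηpos.le]
    have : η + η = d := by rw [hη]; ring
    rw [this, ENNReal.ofReal_coe_nnreal]
    exact hδrq
  obtain ⟨τ, hτ1, hτ2⟩ := ENNReal.lt_iff_exists_nnreal_btwn.1 hηlt
  set t : ℝ := (τ : ℝ) with htdef
  have ht0 : 0 ≤ t := τ.coe_nonneg
  have hηt : η < t := by
    rw [← ENNReal.ofReal_coe_nnreal] at hτ1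
    by_contra hcon
    push_neg at hcon
    exact absurd (ENNReal.ofReal_le_ofReal hcon) (not_le.2 hτ1)
  have htrad : (‖t‖₊ : ℝ≥0∞) < (p.changeOrigin x0).radius := by
    rw [← enorm_eq_nnnorm, Real.enorm_eq_ofReal ht0, ENNReal.ofReal_coe_nnreal]
    exact lt_of_lt_of_le hτ2 hradc
  have hsummable := pnce_summable_shift a ha hx0pos.le ht0 hx0rad htrad
  -- contradiction with the radius
  have hle : ENNReal.ofReal (x0 + t) ≤ p.radius := by
    have hs : Summable (fun n => ‖p n‖ * ((x0 + t).toNNReal : ℝ) ^ n) := by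
      rw [Real.coe_toNNReal _ (by positivity)]
      simpa [hpnorm] using hsummable
    have := p.le_radius_of_summable (r := (x0 + t).toNNReal) hs
    rwa [ENNReal.ofReal]
  have hgt : p.radius < ENNReal.ofReal (x0 + t) := by
    rw [← hρeq]
    refine (ENNReal.ofReal_lt_ofReal_iff (by positivity)).2 ?_
    rw [hx0]
    linarith
  exact absurd hle (not_le.2 hgt)
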